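/- Suppose a mechanism M : multiset Z → PMF α is ε-DP in the bounded sense. Fix a distribution q on multisets of size n−1 and a distribution p on Z, with the multiset independent of the challenge element. Define the member observation distribution P₀ on α × Z by sampling z ~ p, S̃ ~ q, a ~ M(S̃ + {z}) and outputting (a, z); and the non-member distribution P₁ by sampling z ~ p, z' ~ p, S̃ ~ q, a ~ M(S̃ + {z'}) and outputting (a, z). Then for all events E ⊆ α × Z, P₀(E) ≤ e^ε P₁(E) and P₁(E) ≤ e^ε P₀(E), and consequently any test distinguishing P₀ from P₁ has advantage at most (e^ε − 1)/(e^ε + 1). -/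
import Mathlib

private lemma pmf_compl_add {β : Type*} (P : PMF β) (s : Set β) :
    P.toOuterMeasure s + P.toOuterMeasure sᶜ = 1 := by
  rw [PMF.toOuterMeasure_apply, PMF.toOuterMeasure_apply, ← ENNReal.tsum_add]
  have : ∀ x, s.indicator P x + sᶜ.indicator P x = P x := by
    intro x
    by_cases hx : x ∈ s <;> simp [Set.indicator, hx]
  simp only [this]
  exact P.tsum_coe

theorem iid_membership_advantage_bound
    {Z α : Type*} [Countable Z] [MeasurableSpace α] [MeasurableSpace Z]
    (M : Multiset Z → PMF α) (ε : ℝ) (hε : 0 ≤ ε) (n : ℕ)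
    (hDP : ∀ (T : Multiset Z) (z z' : Z) (R : Set α),
      (M (z ::ₘ T)).toOuterMeasure R ≤
        ENNReal.ofReal (Real.exp ε) * (M (z' ::ₘ T)).toOuterMeasure R)
    (p : PMF Z) (q : PMF (Multiset Z))
    (hq : ∀ T ∈ q.support, Multiset.card T = n - 1)
    (P₀ P₁ : PMF (α × Z))
    (hP₀ : P₀ = p.bind (fun z => q.bind (fun T =>
      (M (z ::ₘ T)).map (fun a => (a, z)))))
    (hP₁ : P₁ = p.bind (fun z => p.bind (fun z' => q.bind (fun T =>
      (M (z' ::ₘ T)).map (fun a => (a, z)))))) :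
    (∀ E : Set (α × Z),
      P₀.toOuterMeasure E ≤ ENNReal.ofReal (Real.exp ε) * P₁.toOuterMeasure E ∧
      P₁.toOuterMeasure E ≤ ENNReal.ofReal (Real.exp ε) * P₀.toOuterMeasure E) ∧
    (∀ f : α × Z → Bool,
      (P₀.toOuterMeasure {x | f x = false}).toReal -
          (P₁.toOuterMeasure {x | f x = false}).toReal ≤
        (Real.exp ε - 1) / (Real.exp ε + 1)) := by
  set c : ENNReal := ENNReal.ofReal (Real.exp ε) with hc
  -- inner measure notation
  have key : ∀ E : Set (α × Z),
      P₀.toOuterMeasure E ≤ c * P₁.toOuterMeasure E ∧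
      P₁.toOuterMeasure E ≤ c * P₀.toOuterMeasure E := by
    intro E
    have h0 : P₀.toOuterMeasure E =
        ∑' z, p z * ∑' T, q T * (M (z ::ₘ T)).toOuterMeasure ((fun a => (a, z)) ⁻¹' E) := by
      rw [hP₀, PMF.toOuterMeasure_bind_apply]
      refine tsum_congr fun z => ?_
      rw [PMF.toOuterMeasure_bind_apply]
      congr 1
      exact tsum_congr fun T => by rw [PMF.toOuterMeasure_map_apply]
    have h1 : P₁.toOuterMeasure E =
        ∑' z, p z * ∑' z', p z' *
          ∑' T, q T * (M (z' ::ₘ T)).toOuterMeasure ((fun a => (a, z)) ⁻¹' E) := by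
      rw [hP₁, PMF.toOuterMeasure_bind_apply]
      refine tsum_congr fun z => ?_
      rw [PMF.toOuterMeasure_bind_apply]
      congr 1
      refine tsum_congr fun z' => ?_
      rw [PMF.toOuterMeasure_bind_apply]
      congr 1
      exact tsum_congr fun T => by rw [PMF.toOuterMeasure_map_apply]
    constructor
    · rw [h0, h1, ← ENNReal.tsum_mul_left]
      refine ENNReal.tsum_le_tsum fun z => ?_
      rw [← mul_assoc, mul_comm c (p z), mul_assoc]
      refine mul_le_mul_right ?_ (p z)
      calc ∑' T, q T * (M (z ::ₘ T)).toOuterMeasure ((fun a => (a, z)) ⁻¹' E)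
          = ∑' z', p z' * ∑' T, q T * (M (z ::ₘ T)).toOuterMeasure ((fun a => (a, z)) ⁻¹' E) := by
            rw [ENNReal.tsum_mul_right, p.tsum_coe, one_mul]
        _ ≤ ∑' z', p z' * (c *
              ∑' T, q T * (M (z' ::ₘ T)).toOuterMeasure ((fun a => (a, z)) ⁻¹' E)) := by
            refine ENNReal.tsum_le_tsum fun z' => mul_le_mul_right ?_ (p z')
            rw [← ENNReal.tsum_mul_left]
            refine ENNReal.tsum_le_tsum fun T => ?_
            rw [← mul_assoc, mul_comm c (q T), mul_assoc]
            exact mul_le_mul_right (hDP T z z' _) (q T)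
        _ = c * ∑' z', p z' *
              ∑' T, q T * (M (z' ::ₘ T)).toOuterMeasure ((fun a => (a, z)) ⁻¹' E) := by
            rw [← ENNReal.tsum_mul_left]
            exact tsum_congr fun z' => by ring
    · rw [h0, h1, ← ENNReal.tsum_mul_left]
      refine ENNReal.tsum_le_tsum fun z => ?_
      rw [← mul_assoc, mul_comm c (p z), mul_assoc]
      refine mul_le_mul_right ?_ (p z)
      calc ∑' z', p z' * ∑' T, q T * (M (z' ::ₘ T)).toOuterMeasure ((fun a => (a, z)) ⁻¹' E)
          ≤ ∑' z', p z' * (c *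
              ∑' T, q T * (M (z ::ₘ T)).toOuterMeasure ((fun a => (a, z)) ⁻¹' E)) := by
            refine ENNReal.tsum_le_tsum fun z' => mul_le_mul_right ?_ (p z')
            rw [← ENNReal.tsum_mul_left]
            refine ENNReal.tsum_le_tsum fun T => ?_
            rw [← mul_assoc, mul_comm c (q T), mul_assoc]
            exact mul_le_mul_right (hDP T z' z _) (q T)
        _ = c * ∑' T, q T * (M (z ::ₘ T)).toOuterMeasure ((fun a => (a, z)) ⁻¹' E) := by
            rw [ENNReal.tsum_mul_right, p.tsum_coe, one_mul]
  refine ⟨key, ?_⟩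
  intro f
  set E : Set (α × Z) := {x | f x = false} with hE
  have hle1 : ∀ (P : PMF (α × Z)) (s : Set (α × Z)), P.toOuterMeasure s ≤ 1 := by
    intro P s
    have := pmf_compl_add P s
    exact le_of_le_of_eq (le_add_right le_rfl) this
  set A := (P₀.toOuterMeasure E).toReal with hA
  set B := (P₁.toOuterMeasure E).toReal with hB
  have hfin0 : P₀.toOuterMeasure E ≠ ⊤ := ne_top_of_le_ne_top ENNReal.one_ne_top (hle1 _ _)
  have hfin1 : P₁.toOuterMeasure E ≠ ⊤ := ne_top_of_le_ne_top ENNReal.one_ne_top (hle1 _ _)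
  have hfin0c : P₀.toOuterMeasure Eᶜ ≠ ⊤ := ne_top_of_le_ne_top ENNReal.one_ne_top (hle1 _ _)
  have hfin1c : P₁.toOuterMeasure Eᶜ ≠ ⊤ := ne_top_of_le_ne_top ENNReal.one_ne_top (hle1 _ _)
  have hA1 : A + (P₀.toOuterMeasure Eᶜ).toReal = 1 := by
    rw [hA, ← ENNReal.toReal_add hfin0 hfin0c, pmf_compl_add, ENNReal.toReal_one]
  have hB1 : B + (P₁.toOuterMeasure Eᶜ).toReal = 1 := by
    rw [hB, ← ENNReal.toReal_add hfin1 hfin1c, pmf_compl_add, ENNReal.toReal_one]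
  have hcR : c.toReal = Real.exp ε := ENNReal.toReal_ofReal (Real.exp_pos ε).le
  -- real inequalities
  have ineq1 : A ≤ Real.exp ε * B := by
    have := (key E).1
    have := ENNReal.toReal_mono (by
      exact ENNReal.mul_ne_top (by simp [hc]) hfin1) this
    rwa [ENNReal.toReal_mul, hcR] at this
  have ineq2 : (P₁.toOuterMeasure Eᶜ).toReal ≤ Real.exp ε * (P₀.toOuterMeasure Eᶜ).toReal := by
    have := (key Eᶜ).2
    have := ENNReal.toReal_mono (by
      exact ENNReal.mul_ne_top (by simp [hc]) hfin0c) this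
    rwa [ENNReal.toReal_mul, hcR] at this
  -- combine: (1+e^ε)(A-B) ≤ e^ε - 1
  have hexp1 : (1:ℝ) ≤ Real.exp ε := Real.one_le_exp hε
  have hpos : (0:ℝ) < Real.exp ε + 1 := by positivity
  rw [le_div_iff₀ hpos]
  -- from ineq2 : 1 - B ≤ e^ε (1 - A)
  have ineq2' : 1 - B ≤ Real.exp ε * (1 - A) := by
    have h1 : (P₁.toOuterMeasure Eᶜ).toReal = 1 - B := by linarith
    have h2 : (P₀.toOuterMeasure Eᶜ).toReal = 1 - A := by linarith
    rw [h1, h2] at ineq2; exact ineq2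
  nlinarith [ineq1, ineq2']
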